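/- Let R be a finite local ring of odd characteristic, n a positive integer, and β a non-degenerate symmetric bilinear form on Rⁿ with associated matrix B. Then there exist an invertible n×n matrix P over R and an element u ∈ R, where either u = 1 or u is a non-square unit of R, such that Pᵀ B P is the diagonal matrix with diagonal entries d₁, …, dₙ given by dᵢ = (−1)^{i+1} for i < n and dₙ = (−1)^{n+1}·u. (Equivalently, β is equivalent to x₁y₁ − x₂y₂ + ⋯ − x_{n−1}y_{n−1} + u·xₙyₙ when n is odd, and to x₁y₁ − x₂y₂ + ⋯ + x_{n−1}y_{n−1} − u·xₙyₙ when n is even.) -/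

import Mathlib

open Matrix

open Polynomial

namespace Stmt9

section A






variable {R : Type*} [CommRing R] [IsLocalRing R]

lemma unit_add_nonunit {u x : R} (hu : IsUnit u) (hx : ¬ IsUnit x) : IsUnit (u + x) := by
  by_contra h
  rcases IsLocalRing.isUnit_or_isUnit_of_isUnit_add
      (a := u + x) (b := -x) (by simpa using hu) with h' | h'
  · exact h h'
  · exact hx (by simpa using h')

lemma isUnit_two (hchar : Odd (ringChar R)) : IsUnit (2 : R) := by
  by_contra h2
  have hres : IsLocalRing.residue R 2 = 0 := by
    by_contra h
    exact h2 ((IsLocalRing.residue_ne_zero_iff_isUnit 2).mp h)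
  set k := IsLocalRing.ResidueField R
  have h2k : (2 : k) = 0 := by rw [← map_ofNat (IsLocalRing.residue R) 2]; exact hres
  have hdvd2 : ringChar k ∣ 2 := by
    apply (ringChar.spec k 2).mp
    exact_mod_cast h2k
  have hdvdR : ringChar k ∣ ringChar R := by
    apply (ringChar.spec k (ringChar R)).mp
    have h0 : ((ringChar R : ℕ) : R) = 0 := (ringChar.spec R (ringChar R)).mpr dvd_rfl
    calc ((ringChar R : ℕ) : k) = IsLocalRing.residue R ((ringChar R : ℕ) : R) := by
          rw [map_natCast]
      _ = 0 := by rw [h0, map_zero]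
  haveI := ringChar.charP k
  rcases (Nat.dvd_prime Nat.prime_two).mp hdvd2 with h1 | h1
  · exact CharP.char_ne_one k (ringChar k) h1
  · rw [h1] at hdvdR
    rw [Nat.odd_iff] at hchar
    omega

lemma exists_sq_of_near_one [Fintype R] (h2 : IsUnit (2 : R)) {w : R}
    (hw : ¬ IsUnit (w - 1)) : ∃ s : R, IsUnit s ∧ s * s = w := by
  classical
  set S : Finset R := Finset.univ.filter (fun x => ¬ IsUnit (x - 1)) with hS
  have hmem : ∀ x, x ∈ S ↔ ¬ IsUnit (x - 1) := by
    intro x; simp [hS]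
  have hmaps : ∀ x ∈ S, x * x ∈ S := by
    intro x hx
    rw [hmem] at hx ⊢
    intro hu
    have h : x * x - 1 = (x - 1) * (x + 1) := by ring
    rw [h] at hu
    exact hx (isUnit_of_mul_isUnit_left hu)
  have hinj : ∀ x ∈ S, ∀ y ∈ S, x * x = y * y → x = y := by
    intro x hx y hy hxy
    rw [hmem] at hx hy
    have hxyu : IsUnit (x + y) := by
      have h : x + y = 2 + ((x - 1) + (y - 1)) := by ring
      rw [h]
      exact unit_add_nonunit h2 (fun hu => by
        rcases IsLocalRing.isUnit_or_isUnit_of_isUnit_add hu with h' | h' <;> tauto)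
    have hxy0 : x - y = 0 := by
      have h0 : (x - y) * ((x + y) * ↑hxyu.unit⁻¹) = 0 := by
        rw [← mul_assoc]
        rw [show (x - y) * (x + y) = 0 from by linear_combination hxy]
        rw [zero_mul]
      rwa [IsUnit.mul_val_inv, mul_one] at h0
    linear_combination hxy0
  have hsurj := Finset.surj_on_of_inj_on_of_card_le (s := S) (t := S)
    (fun x _ => x * x) (fun x hx => hmaps x hx) (fun a b ha hb h => hinj a ha b hb h) le_rfl
  obtain ⟨s, hsS, hs⟩ := hsurj w ((hmem w).mpr hw)
  refine ⟨s, ?_, hs.symm⟩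
  rw [hmem] at hsS
  have := unit_add_nonunit isUnit_one hsS
  simpa using this



end A

section B



variable {R : Type*} [CommRing R] [IsLocalRing R]

lemma card_residue_odd [Fintype R] (hchar : Odd (ringChar R))
    [Fintype (IsLocalRing.ResidueField R)] :
      Fintype.card (IsLocalRing.ResidueField R) % 2 = 1 := by
  set k := IsLocalRing.ResidueField R
  set p := ringChar k with hp
  haveI := ringChar.charP k
  haveI hfact : Fact p.Prime := ⟨CharP.char_is_prime k p⟩
  obtain ⟨n, hn⟩ := FiniteField.card k p
  have hdvdR : p ∣ ringChar R := by
    apply (ringChar.spec k (ringChar R)).mp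
    have h0 : ((ringChar R : ℕ) : R) = 0 := (ringChar.spec R (ringChar R)).mpr dvd_rfl
    calc ((ringChar R : ℕ) : k) = IsLocalRing.residue R ((ringChar R : ℕ) : R) := by
          rw [map_natCast]
      _ = 0 := by rw [h0, map_zero]
  have hpodd : Odd p := by
    rcases Nat.Prime.eq_two_or_odd' hfact.out with h | h
    · exfalso
      rw [h] at hdvdR
      rw [Nat.odd_iff] at hchar; omega
    · exact h
  rw [← Nat.odd_iff]
  have hodd : Odd (Fintype.card k) := by rw [hn.2]; exact hpodd.pow
  convert hodd using 2

lemma exists_rep [Fintype R] (hchar : Odd (ringChar R)) (h2 : IsUnit (2 : R))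
    (hsq : ∀ w : R, ¬ IsUnit (w - 1) → ∃ s : R, IsUnit s ∧ s * s = w)
    {a b c : R} (ha : IsUnit a) (hb : IsUnit b) (hc : IsUnit c) :
    ∃ x y : R, a * x ^ 2 + b * y ^ 2 = c := by
  classical
  set k := IsLocalRing.ResidueField R
  haveI : Finite k := Finite.of_surjective _ IsLocalRing.residue_surjective
  haveI : Fintype k := Fintype.ofFinite k
  set res := IsLocalRing.residue R with hresdef
  have hka : res a ≠ 0 := (IsLocalRing.residue_ne_zero_iff_isUnit a).mpr ha
  have hkb : res b ≠ 0 := (IsLocalRing.residue_ne_zero_iff_isUnit b).mpr hb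
  have hcard := card_residue_odd (R := R) hchar
  obtain ⟨x₀, y₀, hxy⟩ := FiniteField.exists_root_sum_quadratic
    (f := C (res a) * X ^ 2 + C 0 * X + C (- res c))
    (g := C (res b) * X ^ 2 + C 0 * X + C 0)
    (Polynomial.degree_quadratic hka) (Polynomial.degree_quadratic hkb) hcard
  simp only [eval_add, eval_mul, eval_pow, eval_C, eval_X, zero_mul, add_zero, mul_zero] at hxy
  have hk : res a * x₀ ^ 2 + res b * y₀ ^ 2 = res c := by linear_combination hxy
  obtain ⟨x₁, hx₁⟩ := IsLocalRing.residue_surjective (R := R) x₀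
  obtain ⟨y₁, hy₁⟩ := IsLocalRing.residue_surjective (R := R) y₀
  set t := a * x₁ ^ 2 + b * y₁ ^ 2 with ht
  have hrt : res t = res c := by
    have h1 : res t = res a * x₀ ^ 2 + res b * y₀ ^ 2 := by
      rw [ht, ← hx₁, ← hy₁]
      simp only [map_add, _root_.map_mul, map_pow, hresdef]
    rw [h1, hk]
  set w := (↑hc.unit⁻¹ : R) * t with hw
  have hw1 : ¬ IsUnit (w - 1) := by
    have hres0 : res (w - 1) = 0 := by
      have h1 : res w = 1 := by
        rw [hw, _root_.map_mul, hrt, ← _root_.map_mul, IsUnit.val_inv_mul, _root_.map_one]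
      rw [map_sub, h1, _root_.map_one, sub_self]
    intro h
    exact (IsLocalRing.residue_ne_zero_iff_isUnit _).mpr h hres0
  obtain ⟨s, hsu, hs⟩ := hsq w hw1
  have hts : t = c * (s * s) := by
    rw [hs, hw, ← mul_assoc, IsUnit.mul_val_inv, one_mul]
  refine ⟨x₁ * ↑hsu.unit⁻¹, y₁ * ↑hsu.unit⁻¹, ?_⟩
  have hsi : s * ↑hsu.unit⁻¹ = 1 := hsu.mul_val_inv
  calc a * (x₁ * ↑hsu.unit⁻¹) ^ 2 + b * (y₁ * ↑hsu.unit⁻¹) ^ 2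
      = (a * x₁ ^ 2 + b * y₁ ^ 2) * (↑hsu.unit⁻¹ * ↑hsu.unit⁻¹) := by ring
    _ = (c * (s * s)) * (↑hsu.unit⁻¹ * ↑hsu.unit⁻¹) := by rw [← ht, hts]
    _ = c * ((s * ↑hsu.unit⁻¹) * (s * ↑hsu.unit⁻¹)) := by ring
    _ = c := by rw [hsi]; ring



end B

section C



variable {R : Type*} [CommRing R]

def Cong {ι : Type*} [Fintype ι] [DecidableEq ι] (A B : Matrix ι ι R) : Prop :=
  ∃ P : Matrix ι ι R, IsUnit P.det ∧ Pᵀ * A * P = B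

variable {ι κ : Type*} [Fintype ι] [DecidableEq ι] [Fintype κ] [DecidableEq κ]

lemma Cong.refl (A : Matrix ι ι R) : Cong A A :=
  ⟨1, by simp, by simp⟩

lemma Cong.trans {A B C : Matrix ι ι R} (h1 : Cong A B) (h2 : Cong B C) : Cong A C := by
  obtain ⟨P, hP, hPe⟩ := h1
  obtain ⟨Q, hQ, hQe⟩ := h2
  refine ⟨P * Q, by simp [hP.mul hQ], ?_⟩
  rw [transpose_mul]
  rw [show Qᵀ * Pᵀ * A * (P * Q) = Qᵀ * (Pᵀ * A * P) * Q by noncomm_ring]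
  rw [hPe, hQe]

lemma Cong.isSymm {A B : Matrix ι ι R} (h : Cong A B) (hA : A.IsSymm) : B.IsSymm := by
  obtain ⟨P, hP, rfl⟩ := h
  unfold Matrix.IsSymm
  rw [transpose_mul, transpose_mul, transpose_transpose, hA.eq, Matrix.mul_assoc]

lemma Cong.isUnit_det {A B : Matrix ι ι R} (h : Cong A B) (hA : IsUnit A.det) :
    IsUnit B.det := by
  obtain ⟨P, hP, rfl⟩ := h
  rw [det_mul, det_mul, det_transpose]
  exact (hP.mul hA).mul hP

lemma Cong.submatrix {A B : Matrix ι ι R} (e : κ ≃ ι) (h : Cong A B) :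
    Cong (A.submatrix e e) (B.submatrix e e) := by
  obtain ⟨P, hP, rfl⟩ := h
  refine ⟨P.submatrix e e, by rwa [det_submatrix_equiv_self], ?_⟩
  rw [show (P.submatrix e e)ᵀ = Pᵀ.submatrix e e from rfl]
  rw [submatrix_mul_equiv, submatrix_mul_equiv]

lemma Cong.block {ι₂ : Type*} [Fintype ι₂] [DecidableEq ι₂]
    {C D : Matrix ι₂ ι₂ R} (X : Matrix ι ι R) (h : Cong C D) :
    Cong (fromBlocks X 0 0 C) (fromBlocks X 0 0 D) := by
  obtain ⟨P, hP, rfl⟩ := h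
  refine ⟨fromBlocks 1 0 0 P, ?_, ?_⟩
  · rw [det_fromBlocks_zero₂₁, det_one, one_mul]
    exact hP
  · rw [fromBlocks_transpose, fromBlocks_multiply, fromBlocks_multiply]
    simp [Matrix.mul_assoc]


variable [IsLocalRing R]

lemma unit_add_nonunit' {u x : R} (hu : IsUnit u) (hx : ¬ IsUnit x) : IsUnit (u + x) := by
  by_contra h
  rcases IsLocalRing.isUnit_or_isUnit_of_isUnit_add
      (a := u + x) (b := -x) (by simpa using hu) with h' | h'
  · exact h h'
  · exact hx (by simpa using h')

lemma exists_unit_entry {m : ℕ} (M : Matrix (Fin (m+1)) (Fin (m+1)) R)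
    (h : IsUnit M.det) : ∃ i j, IsUnit (M i j) := by
  by_contra hc
  push_neg at hc
  have hdet : M.det ∈ IsLocalRing.maximalIdeal R := by
    rw [Matrix.det_apply']
    apply Submodule.sum_mem
    intro σ _
    apply Ideal.mul_mem_left
    rw [← Finset.mul_prod_erase Finset.univ _ (Finset.mem_univ (0 : Fin (m+1)))]
    apply Ideal.mul_mem_right
    rw [IsLocalRing.mem_maximalIdeal, mem_nonunits_iff]
    exact hc _ _
  rw [IsLocalRing.mem_maximalIdeal, mem_nonunits_iff] at hdet
  exact hdet h

lemma pivot {m : ℕ} (h2 : IsUnit (2 : R)) (M : Matrix (Fin (m+1)) (Fin (m+1)) R)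
    (hs : M.IsSymm) (h : IsUnit M.det) :
    ∃ M', Cong M M' ∧ IsUnit (M' 0 0) := by
  -- Step 1: find M₁ congruent to M with a unit diagonal entry
  have step1 : ∃ M₁, Cong M M₁ ∧ ∃ i, IsUnit (M₁ i i) := by
    by_cases hd : ∃ i, IsUnit (M i i)
    · exact ⟨M, Cong.refl M, hd⟩
    · push_neg at hd
      obtain ⟨i, j, hij⟩ := exists_unit_entry M h
      have hne : i ≠ j := by
        rintro rfl
        exact hd i hij
      set t := Matrix.transvection j i (1 : R) with ht
      have htt : tᵀ = Matrix.transvection i j (1 : R) := by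
        rw [ht]
        unfold Matrix.transvection
        ext a b
        simp [Matrix.transpose_apply, Matrix.single, Matrix.one_apply, and_comm, eq_comm]
      refine ⟨tᵀ * M * t, ⟨t, ?_, rfl⟩, i, ?_⟩
      · rw [Matrix.det_transvection_of_ne _ _ hne.symm]
        exact isUnit_one
      · have hN : (M * t) i i = M i i + M i j := by
          rw [ht, Matrix.mul_transvection_apply_same, one_mul]
        have hN2 : (M * t) j i = M j i + M j j := by
          rw [ht, Matrix.mul_transvection_apply_same, one_mul]
        have : (tᵀ * (M * t)) i i = (M * t) i i + (M * t) j i := by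
          rw [htt, Matrix.transvection_mul_apply_same, one_mul]
        rw [Matrix.mul_assoc, this, hN, hN2]
        have hsym : M j i = M i j := hs.apply i j
        have heq : M i i + M i j + (M j i + M j j) = 2 * M i j + (M i i + M j j) := by
          rw [hsym]; ring
        rw [heq]
        exact unit_add_nonunit' (h2.mul hij)
          (fun hu => by
            rcases IsLocalRing.isUnit_or_isUnit_of_isUnit_add hu with h' | h' <;> exact hd _ h')
  -- Step 2: swap
  obtain ⟨M₁, hM₁, i, hi⟩ := step1
  set σ := Equiv.swap (0 : Fin (m+1)) i with hσ
  refine ⟨M₁.submatrix σ σ, hM₁.trans ⟨σ.toPEquiv.toMatrix, ?_, ?_⟩, ?_⟩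
  · rw [show (σ.toPEquiv.toMatrix : Matrix (Fin (m+1)) (Fin (m+1)) R) = σ.permMatrix R from rfl]
    rw [Matrix.det_permutation]
    rcases Int.units_eq_one_or (Equiv.Perm.sign σ) with hsg | hsg <;> rw [hsg] <;> simp
  · rw [show (σ.toPEquiv.toMatrix : Matrix (Fin (m+1)) (Fin (m+1)) R)ᵀ
        = σ.symm.toPEquiv.toMatrix from by rw [← PEquiv.toMatrix_symm, Equiv.toPEquiv_symm]]
    rw [Matrix.mul_assoc, PEquiv.mul_toMatrix_toPEquiv, PEquiv.toMatrix_toPEquiv_mul]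
    ext a b
    simp [Matrix.submatrix_apply, hσ, Equiv.symm_swap]
  · rw [Matrix.submatrix_apply]
    simpa [hσ, Equiv.swap_apply_left] using hi


def Es (m : ℕ) : Fin 1 ⊕ Fin m ≃ Fin (m+1) := finSumFinEquiv.trans (finCongr (Nat.add_comm 1 m))
def E2 (m : ℕ) : Fin 2 ⊕ Fin m ≃ Fin (m+2) := finSumFinEquiv.trans (finCongr (Nat.add_comm 2 m))

lemma Es_inl (m : ℕ) : Es m (Sum.inl 0) = 0 := by
  apply Fin.ext
  simp [Es]

lemma Es_inr (m : ℕ) (j : Fin m) : (Es m (Sum.inr j) : ℕ) = (j : ℕ) + 1 := by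
  simp [Es]

lemma E2_inl0 (m : ℕ) : E2 m (Sum.inl 0) = 0 := by
  apply Fin.ext
  simp [E2]

lemma E2_inl1 (m : ℕ) : E2 m (Sum.inl 1) = 1 := by
  apply Fin.ext
  simp [E2]

lemma split {m : ℕ} (M : Matrix (Fin (m+1)) (Fin (m+1)) R)
    (hsym : M.IsSymm) (hdet : IsUnit M.det) (ha : IsUnit (M 0 0)) :
    ∃ C : Matrix (Fin m) (Fin m) R, C.IsSymm ∧ IsUnit C.det ∧
      Cong M ((fromBlocks (M 0 0 • 1) 0 0 C).submatrix (Es m).symm (Es m).symm) := by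
  classical
  set e := Es m with he
  set A := M.submatrix e e with hA
  have hAsym : A.IsSymm := hsym.submatrix _
  have hA11 : A.toBlocks₁₁ = M 0 0 • (1 : Matrix (Fin 1) (Fin 1) R) := by
    ext i j
    have hi : i = 0 := Subsingleton.elim _ _
    have hj : j = 0 := Subsingleton.elim _ _
    subst hi; subst hj
    show A (Sum.inl 0) (Sum.inl 0) = _
    rw [hA, Matrix.submatrix_apply, he, Es_inl]
    simp [Matrix.one_apply]
  set a' := (↑ha.unit⁻¹ : R) with ha'
  set v := A.toBlocks₁₂ with hv
  set N : Matrix (Fin 1) (Fin m) R := (-a') • v with hN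
  set Q : Matrix (Fin 1 ⊕ Fin m) (Fin 1 ⊕ Fin m) R := fromBlocks 1 N 0 1 with hQ
  set Cm := Nᵀ * v + A.toBlocks₂₂ with hCm
  have hQdet : IsUnit Q.det := by
    rw [hQ, det_fromBlocks_zero₂₁]; simp
  have h21 : A.toBlocks₂₁ = vᵀ := by
    ext i j
    exact hAsym.apply (Sum.inl j) (Sum.inr i)
  have haa : M 0 0 * a' = 1 := ha.mul_val_inv
  have hMN : M 0 0 • N = -v := by
    rw [hN, smul_smul, mul_neg, haa, neg_smul, one_smul]
  have hMNT : M 0 0 • Nᵀ = -vᵀ := by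
    rw [hN, Matrix.transpose_smul, smul_smul, mul_neg, haa, neg_smul, one_smul]
  have key : Qᵀ * A * Q = fromBlocks (M 0 0 • 1) 0 0 Cm := by
    conv_lhs => rw [(fromBlocks_toBlocks A).symm]
    rw [hQ, fromBlocks_transpose, transpose_one, transpose_zero,
      fromBlocks_multiply, fromBlocks_multiply]
    rw [hA11, h21]
    simp
    refine ⟨?_, ?_, ?_⟩
    · rw [hMN]; exact neg_add_cancel _
    · rw [hMNT]; exact neg_add_cancel _
    · rw [show M 0 0 • Nᵀ + vᵀ = 0 from by rw [hMNT]; exact neg_add_cancel _,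
        Matrix.zero_mul]
      rw [zero_add, hCm, hv]
  have congA : Cong A (fromBlocks (M 0 0 • 1) 0 0 Cm) := ⟨Q, hQdet, key⟩
  have hAdet : IsUnit A.det := by
    rw [hA, det_submatrix_equiv_self]; exact hdet
  have hFdet : IsUnit (fromBlocks (M 0 0 • (1 : Matrix (Fin 1) (Fin 1) R)) 0 0 Cm).det :=
    congA.isUnit_det hAdet
  have hFsym : (fromBlocks (M 0 0 • (1 : Matrix (Fin 1) (Fin 1) R)) 0 0 Cm).IsSymm :=
    congA.isSymm hAsym
  have hCsym : Cm.IsSymm := by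
    have h := hFsym
    unfold Matrix.IsSymm at h
    rw [fromBlocks_transpose] at h
    have h2 := congrArg Matrix.toBlocks₂₂ h
    exact (by simpa using h2 : Cmᵀ = Cm)
  have hCdet : IsUnit Cm.det := by
    rw [det_fromBlocks_zero₂₁] at hFdet
    exact isUnit_of_mul_isUnit_right hFdet
  refine ⟨Cm, hCsym, hCdet, ?_⟩
  have := congA.submatrix e.symm
  have hback : A.submatrix e.symm e.symm = M := by
    rw [hA, Matrix.submatrix_submatrix]
    simp
  rwa [hback] at this

lemma two_by_two (a b c x y : R) (h : a * x ^ 2 + b * y ^ 2 = c) :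
    (!![x, b*y; y, -(a*x)])ᵀ * !![a,0;0,b] * !![x, b*y; y, -(a*x)]
      = !![c, 0; 0, a*b*c] := by
  have ht : (!![x, b*y; y, -(a*x)])ᵀ = !![x, y; b*y, -(a*x)] := by
    ext i j; fin_cases i <;> fin_cases j <;> rfl
  rw [ht, Matrix.mul_fin_two, Matrix.mul_fin_two]
  ext i j
  fin_cases i <;> fin_cases j <;> simp
  · linear_combination h
  · ring
  · ring
  · linear_combination a*b*h


lemma embed {m : ℕ} (M : Matrix (Fin (m+2)) (Fin (m+2)) R) {a b c : R}
    (hc : IsUnit c)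
    (h00 : M 0 0 = a) (h11 : M 1 1 = b) (h01 : M 0 1 = 0) (h10 : M 1 0 = 0)
    (hrep : ∃ x y : R, a * x ^ 2 + b * y ^ 2 = c) :
    ∃ M₂, Cong M M₂ ∧ M₂ 0 0 = c := by
  classical
  obtain ⟨x, y, hxy⟩ := hrep
  set e := E2 m with he
  set A := M.submatrix e e with hA
  have hA11 : A.toBlocks₁₁ = !![a, 0; 0, b] := by
    ext i j
    fin_cases i <;> fin_cases j <;>
      simp only [Matrix.toBlocks₁₁, Matrix.of_apply, hA, Matrix.submatrix_apply, he,
        Fin.mk_zero, Fin.mk_one]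
    · rw [E2_inl0]; simpa using h00
    · rw [E2_inl0, E2_inl1]; simpa using h01
    · rw [E2_inl0, E2_inl1]; simpa using h10
    · rw [E2_inl1]; simpa using h11
  set P2 : Matrix (Fin 2) (Fin 2) R := !![x, b*y; y, -(a*x)] with hP2
  have hP2det : IsUnit P2.det := by
    rw [hP2, Matrix.det_fin_two_of]
    have : x * -(a*x) - b*y*y = -c := by linear_combination -hxy
    rw [this]
    exact hc.neg
  set Q : Matrix (Fin 2 ⊕ Fin m) (Fin 2 ⊕ Fin m) R := fromBlocks P2 0 0 1 with hQ
  have hQdet : IsUnit Q.det := by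
    rw [hQ, det_fromBlocks_zero₂₁, det_one, mul_one]
    exact hP2det
  have key : (Qᵀ * A * Q).toBlocks₁₁ = !![c, 0; 0, a*b*c] := by
    conv_lhs => rw [(fromBlocks_toBlocks A).symm]
    rw [hQ, fromBlocks_transpose, transpose_zero, transpose_one,
      fromBlocks_multiply, fromBlocks_multiply]
    simp only [Matrix.toBlocks_fromBlocks₁₁]
    rw [hA11]
    have := two_by_two a b c x y hxy
    simp only [Matrix.mul_zero, Matrix.zero_mul, add_zero, zero_add,
      Matrix.mul_one, Matrix.one_mul]
    rw [hP2]
    exact this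
  have congA : Cong A (Qᵀ * A * Q) := ⟨Q, hQdet, rfl⟩
  have congM := congA.submatrix e.symm
  have hback : A.submatrix e.symm e.symm = M := by
    rw [hA, Matrix.submatrix_submatrix]
    simp
  rw [hback] at congM
  refine ⟨(Qᵀ * A * Q).submatrix e.symm e.symm, congM, ?_⟩
  have hs0 : e.symm 0 = Sum.inl 0 := by
    rw [Equiv.symm_apply_eq, he, E2_inl0]
  rw [Matrix.submatrix_apply, hs0]
  have : (Qᵀ * A * Q) (Sum.inl 0) (Sum.inl 0) = (Qᵀ * A * Q).toBlocks₁₁ 0 0 := rfl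
  rw [this, key]
  simp


lemma main_aux (h2 : IsUnit (2 : R))
    (hrep : ∀ {a b c : R}, IsUnit a → IsUnit b → IsUnit c →
      ∃ x y : R, a * x ^ 2 + b * y ^ 2 = c) :
    ∀ (n : ℕ) (s : R), (s = 1 ∨ s = -1) →
      ∀ B : Matrix (Fin (n+1)) (Fin (n+1)) R, B.IsSymm → IsUnit B.det →
      ∃ e, IsUnit e ∧
        Cong B (diagonal (fun i : Fin (n+1) =>
          if (i : ℕ) = n then e else s * (-1) ^ (i : ℕ))) := by
  intro n
  induction n with
  | zero =>
    intro s hs B hsymm hdet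
    refine ⟨B 0 0, by rwa [← Matrix.det_fin_one B], ?_⟩
    have hB : B = diagonal (fun i : Fin 1 =>
        if (i : ℕ) = 0 then B 0 0 else s * (-1) ^ (i : ℕ)) := by
      ext i j
      have hi : i = 0 := by apply Fin.ext; omega
      have hj : j = 0 := by apply Fin.ext; omega
      subst hi; subst hj
      simp [Matrix.diagonal_apply]
    exact hB ▸ Cong.refl B
  | succ n ih =>
    intro s hs B hsymm hdet
    have hsu : IsUnit s := by
      rcases hs with rfl | rfl
      · exact isUnit_one
      · exact isUnit_one.neg
    obtain ⟨B₁, hC1, ha₀⟩ := pivot h2 B hsymm hdet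
    have hB₁sym := hC1.isSymm hsymm
    have hB₁det := hC1.isUnit_det hdet
    obtain ⟨C, hCsym, hCdet, hC2⟩ := split B₁ hB₁sym hB₁det ha₀
    obtain ⟨C₁, hC3, hb⟩ := pivot h2 C hCsym hCdet
    have hC4 := (Cong.block (ι := Fin 1) (B₁ 0 0 • 1) hC3).submatrix (Es (n+1)).symm
    set M₁ := (fromBlocks (B₁ 0 0 • 1) 0 0 C₁).submatrix (Es (n+1)).symm (Es (n+1)).symm
      with hM₁
    have hsy0 : (Es (n+1)).symm 0 = Sum.inl 0 := by
      rw [Equiv.symm_apply_eq, Es_inl]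
    have hsy1 : (Es (n+1)).symm 1 = Sum.inr 0 := by
      rw [Equiv.symm_apply_eq]
      apply Fin.ext
      rw [Es_inr]
      simp
    have h00 : M₁ 0 0 = B₁ 0 0 := by
      rw [hM₁, Matrix.submatrix_apply, hsy0]
      simp [Matrix.fromBlocks]
    have h11 : M₁ 1 1 = C₁ 0 0 := by
      rw [hM₁, Matrix.submatrix_apply, hsy1]
      simp [Matrix.fromBlocks]
    have h01 : M₁ 0 1 = 0 := by
      rw [hM₁, Matrix.submatrix_apply, hsy0, hsy1]
      simp [Matrix.fromBlocks]
    have h10 : M₁ 1 0 = 0 := by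
      rw [hM₁, Matrix.submatrix_apply, hsy0, hsy1]
      simp [Matrix.fromBlocks]
    obtain ⟨M₂, hC5, hM₂00⟩ := embed M₁ hsu h00 h11 h01 h10 (hrep ha₀ hb hsu)
    have congBM₂ : Cong B M₂ := (hC1.trans hC2).trans (hC4.trans hC5)
    have hM₂sym := congBM₂.isSymm hsymm
    have hM₂det := congBM₂.isUnit_det hdet
    obtain ⟨C₂, hC₂sym, hC₂det, hC6⟩ := split M₂ hM₂sym hM₂det (by rw [hM₂00]; exact hsu)
    rw [hM₂00] at hC6
    have hns : (-s = 1 ∨ -s = -1) := by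
      rcases hs with rfl | rfl
      · right; rfl
      · left; simp
    obtain ⟨e, he, hC7⟩ := ih (-s) hns C₂ hC₂sym hC₂det
    set gg : Fin (n+1) → R := fun j => if (j : ℕ) = n then e else (-s) * (-1) ^ (j : ℕ)
      with hgg
    have hC8 := (Cong.block (ι := Fin 1) ((s : R) • 1) hC7).submatrix (Es (n+1)).symm
    have hdiag : (fromBlocks ((s : R) • (1 : Matrix (Fin 1) (Fin 1) R)) 0 0
        (diagonal gg)).submatrix (Es (n+1)).symm (Es (n+1)).symm
        = diagonal (fun i : Fin (n+2) =>
            if (i : ℕ) = n + 1 then e else s * (-1) ^ (i : ℕ)) := by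
      rw [Matrix.smul_one_eq_diagonal, fromBlocks_diagonal,
        Matrix.submatrix_diagonal _ _ (Equiv.injective _)]
      have hfun : (((fun _ : Fin 1 => s) ⊕ᵥ gg) ∘ ⇑(Es (n+1)).symm)
          = (fun i : Fin (n+2) => if (i : ℕ) = n + 1 then e else s * (-1) ^ (i : ℕ)) := by
        funext i
        obtain ⟨x, rfl⟩ := (Es (n+1)).surjective i
        rw [Function.comp_apply, Equiv.symm_apply_apply]
        cases x with
        | inl j =>
          have hj : j = 0 := Subsingleton.elim _ _
          subst hj
          rw [Es_inl]
          simp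
        | inr j =>
          have hival : ((Es (n+1) (Sum.inr j)) : ℕ) = (j : ℕ) + 1 := Es_inr _ _
          rw [Sum.elim_inr, hgg]
          simp only [hival]
          by_cases hjn : (j : ℕ) = n
          · simp [hjn]
          · have hne : ¬ ((j : ℕ) + 1 = n + 1) := by omega
            simp only [hjn, hne, if_false]
            rw [pow_succ]
            ring
      rw [hfun]
    rw [hdiag] at hC8
    exact ⟨e, he, congBM₂.trans (hC6.trans hC8)⟩



end C

end Stmt9


open Stmt9

/-- Over a finite local ring `R` of odd characteristic, every non-degenerate
symmetric bilinear form on `Rⁿ` with matrix `B` is equivalent to a diagonal form with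
diagonal entries `dᵢ = (-1)^(i+1)` for `i < n` (1-indexed; i.e. `(-1)^i` for a 0-indexed
`i < n - 1`) and last entry `(-1)^(n+1)·u`, where `u = 1` or `u` is a non-square unit. -/
theorem stmt_9 (R : Type*) [CommRing R] [IsLocalRing R] [Fintype R]
    (hchar : Odd (ringChar R)) (n : ℕ) (hn : 0 < n)
    (B : Matrix (Fin n) (Fin n) R) (hsymm : B.IsSymm) (hnd : IsUnit B.det) :
    ∃ (P : Matrix (Fin n) (Fin n) R) (u : R), IsUnit P.det ∧
      (u = 1 ∨ (IsUnit u ∧ ¬ ∃ r : R, r ^ 2 = u)) ∧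
      Pᵀ * B * P = Matrix.diagonal
        (fun i : Fin n => if (i : ℕ) = n - 1 then (-1 : R) ^ (i : ℕ) * u
                          else (-1 : R) ^ (i : ℕ)) := by
  classical
  have h2 : IsUnit (2 : R) := isUnit_two hchar
  obtain ⟨m, rfl⟩ : ∃ m, n = m + 1 := ⟨n - 1, by omega⟩
  obtain ⟨e, he, hC⟩ := main_aux h2
    (fun {a b c} ha hb hc => exists_rep hchar h2
      (fun w hw => exists_sq_of_near_one h2 hw) ha hb hc)
    m 1 (Or.inl rfl) B hsymm hnd
  have hm1 : IsUnit ((-1 : R) ^ m) := (isUnit_one.neg).pow m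
  have hmm : (-1 : R) ^ m * (-1 : R) ^ m = 1 := by
    rw [← pow_add]
    exact Even.neg_one_pow ⟨m, by ring⟩
  set u' : R := (-1 : R) ^ m * e with hu'
  have hu'unit : IsUnit u' := hm1.mul he
  by_cases hsq : ∃ r : R, r ^ 2 = u'
  · -- u = 1 : rescale last entry
    obtain ⟨r, hr⟩ := hsq
    have hru : IsUnit r := by
      have : IsUnit (r * r) := by rw [← sq, hr]; exact hu'unit
      exact isUnit_of_mul_isUnit_left this
    set ri : R := ↑hru.unit⁻¹ with hri
    have hrri : r * ri = 1 := hru.mul_val_inv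
    set q : Fin (m+1) → R := fun i => if (i : ℕ) = m then ri else 1 with hq
    have hqu : ∀ i, IsUnit (q i) := by
      intro i
      rw [hq]
      by_cases h : (i : ℕ) = m <;> simp [h]
      exact hru.unit⁻¹.isUnit
    have he' : e = (-1 : R) ^ m * (r * r) := by
      rw [← sq, hr, hu', ← mul_assoc, hmm, one_mul]
    have hdd : (fun i : Fin (m+1) =>
          q i * (if (i : ℕ) = m then e else 1 * (-1) ^ (i : ℕ)) * q i)
        = (fun i : Fin (m+1) =>
          if (i : ℕ) = m then (-1 : R) ^ (i : ℕ) * 1 else (-1 : R) ^ (i : ℕ)) := by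
      funext i
      by_cases h : (i : ℕ) = m
      · simp only [hq, h, if_true]
        rw [he']
        linear_combination ((-1 : R) ^ m * (r * ri + 1)) * hrri
      · simp only [hq, h, if_false]
        ring
    have hcong2 : Cong (diagonal (fun i : Fin (m+1) =>
          if (i : ℕ) = m then e else 1 * (-1) ^ (i : ℕ)))
        (diagonal (fun i : Fin (m+1) =>
          if (i : ℕ) = m then (-1 : R) ^ (i : ℕ) * 1
          else (-1 : R) ^ (i : ℕ))) := by
      refine ⟨diagonal q, ?_, ?_⟩
      · rw [det_diagonal]
        exact Finset.prod_induction q IsUnit (fun a b => IsUnit.mul) isUnit_one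
          (fun i _ => hqu i)
      · rw [diagonal_transpose, diagonal_mul_diagonal, diagonal_mul_diagonal]
        exact congrArg diagonal hdd
    have := hC.trans hcong2
    obtain ⟨P, hP, hPe⟩ := this
    refine ⟨P, 1, hP, Or.inl rfl, ?_⟩
    simpa using hPe
  · -- u = u'
    have hfeq : (fun i : Fin (m+1) =>
          if (i : ℕ) = m then e else 1 * (-1) ^ (i : ℕ))
        = (fun i : Fin (m+1) =>
          if (i : ℕ) = m + 1 - 1 then (-1 : R) ^ (i : ℕ) * u'
          else (-1 : R) ^ (i : ℕ)) := by
      funext i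
      by_cases h : (i : ℕ) = m
      · simp only [h, Nat.add_sub_cancel, if_true]
        rw [hu', ← mul_assoc, hmm, one_mul]
      · simp only [h, Nat.add_sub_cancel, if_false, one_mul]
    rw [hfeq] at hC
    obtain ⟨P, hP, hPe⟩ := hC
    exact ⟨P, u', hP, Or.inr ⟨hu'unit, hsq⟩, hPe⟩
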